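/- The product of 2^p / (2^p − 1), taken over all primes p such that 2^p − 1 is prime, is strictly less than 1.6131008. -/

import Mathlib

open Finset

private lemma aux_factor_le_exp {n : ℕ} (hn : 7 ≤ n) :
    ((2 : ℝ) ^ n) / ((2 : ℝ) ^ n - 1) ≤ Real.exp ((128 / 127) * (1 / 2) ^ n) := by
  have h2 : (1 : ℝ) < 2 ^ n := by
    have : (2 : ℝ) ^ 0 < 2 ^ n := by
      apply pow_lt_pow_right₀ one_lt_two (by omega)
    simpa using this
  have hpos : (0 : ℝ) < 2 ^ n - 1 := by linarith
  have key : ((2 : ℝ) ^ n) / ((2 : ℝ) ^ n - 1) = 1 + 1 / (2 ^ n - 1) := by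
    field_simp
    ring
  rw [key]
  have h1 : (1 : ℝ) / (2 ^ n - 1) ≤ (128 / 127) * (1 / 2) ^ n := by
    rw [div_le_iff₀ hpos]
    have hge : (2 : ℝ) ^ 7 ≤ 2 ^ n := pow_le_pow_right₀ one_le_two hn
    have hinv : ((1 : ℝ) / 2) ^ n * 2 ^ n = 1 := by
      rw [← mul_pow]; norm_num
    have : (128 / 127 : ℝ) * (1 / 2) ^ n * (2 ^ n - 1)
        = 128 / 127 - (128 / 127) * (1 / 2) ^ n := by ring_nf; rw [hinv]; ring
    rw [this]
    have hle : ((1 : ℝ) / 2) ^ n ≤ (1 / 2) ^ 7 :=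
      pow_le_pow_of_le_one (by norm_num) (by norm_num) hn
    nlinarith
  calc 1 + (1 : ℝ) / (2 ^ n - 1) ≤ 1 + (128 / 127) * (1 / 2) ^ n := by linarith
    _ ≤ Real.exp ((128 / 127) * (1 / 2) ^ n) := by
        have := Real.add_one_le_exp ((128 / 127) * (1 / 2) ^ n)
        linarith

private lemma aux_sum_tail (T : Finset ℕ) (hT : ∀ n ∈ T, 7 ≤ n) :
    ∑ n ∈ T, ((1 : ℝ) / 2) ^ n ≤ 2 / 128 := by
  have hsub : T ⊆ Finset.Ico 7 (T.sup id + 1) := by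
    intro n hn
    simp only [Finset.mem_Ico]
    exact ⟨hT n hn, Nat.lt_succ_of_le (Finset.le_sup (f := id) hn)⟩
  calc ∑ n ∈ T, ((1 : ℝ) / 2) ^ n
      ≤ ∑ n ∈ Finset.Ico 7 (T.sup id + 1), ((1 : ℝ) / 2) ^ n := by
        apply Finset.sum_le_sum_of_subset_of_nonneg hsub
        intro i _ _; positivity
    _ = ∑ i ∈ Finset.range (T.sup id + 1 - 7), ((1 : ℝ) / 2) ^ (7 + i) := by
        rw [Finset.sum_Ico_eq_sum_range]
    _ = (1 / 2) ^ 7 * ∑ i ∈ Finset.range (T.sup id + 1 - 7), ((1 : ℝ) / 2) ^ i := by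
        rw [Finset.mul_sum]
        exact Finset.sum_congr rfl fun i _ => by rw [pow_add]
    _ ≤ (1 / 2) ^ 7 * 2 := by
        have := sum_geometric_two_le (T.sup id + 1 - 7)
        have h7 : (0:ℝ) ≤ (1/2)^7 := by positivity
        nlinarith
    _ = 2 / 128 := by norm_num

private lemma aux_prod_le (s : Finset {p : ℕ // p.Prime ∧ (2 ^ p - 1).Prime}) :
    ∏ p ∈ s, ((2 : ℝ) ^ (p : ℕ)) / ((2 : ℝ) ^ (p : ℕ) - 1) ≤ (1024 / 651) * (127 / 125) := by
  classical
  set f : ℕ → ℝ := fun n => ((2 : ℝ) ^ n) / ((2 : ℝ) ^ n - 1) with hf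
  have hone : ∀ n : ℕ, 2 ≤ n → 1 ≤ f n := by
    intro n hn
    have h2 : (1 : ℝ) < 2 ^ n := by
      have : (2 : ℝ) ^ 0 < 2 ^ n := pow_lt_pow_right₀ one_lt_two (by omega)
      simpa using this
    rw [hf]
    rw [le_div_iff₀ (by linarith)]
    linarith
  have hmem2 : ∀ p : {p : ℕ // p.Prime ∧ (2 ^ p - 1).Prime}, 2 ≤ (p : ℕ) := fun p => p.2.1.two_le
  have hnonneg : ∀ n : ℕ, 2 ≤ n → 0 ≤ f n := fun n hn => le_trans zero_le_one (hone n hn)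
  have hinjgen : ∀ (T : Finset {p : ℕ // p.Prime ∧ (2 ^ p - 1).Prime}),
      ∀ x ∈ T, ∀ y ∈ T, (x : ℕ) = (y : ℕ) → x = y := fun T a _ b _ h => Subtype.ext h
  rw [← Finset.prod_filter_mul_prod_filter_not s (fun p => p.1 ≤ 5)]
  have hsmall : ∏ p ∈ s.filter (fun p => p.1 ≤ 5), f (p : ℕ) ≤ 1024 / 651 := by
    rw [← Finset.prod_image (hinjgen _)]
    set T := (s.filter (fun p => p.1 ≤ 5)).image
        (fun p : {p : ℕ // p.Prime ∧ (2 ^ p - 1).Prime} => (p : ℕ)) with hT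
    have hsub : T ⊆ ({2, 3, 5} : Finset ℕ) := by
      intro n hn
      simp only [hT, Finset.mem_image, Finset.mem_filter] at hn
      obtain ⟨p, ⟨_, hle⟩, rfl⟩ := hn
      have h2 : 2 ≤ (p : ℕ) := hmem2 p
      have h4 : (p : ℕ) ≠ 4 := by
        intro h; have := p.2.1; rw [h] at this; norm_num at this
      simp only [Finset.mem_insert, Finset.mem_singleton]
      omega
    have key : ∏ n ∈ T, f n ≤ ∏ n ∈ ({2, 3, 5} : Finset ℕ), f n := by
      rw [← Finset.prod_sdiff hsub]
      have h1 : (1 : ℝ) ≤ ∏ n ∈ ({2, 3, 5} : Finset ℕ) \ T, f n := by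
        calc (1:ℝ) = ∏ n ∈ ({2, 3, 5} : Finset ℕ) \ T, 1 := by simp
          _ ≤ _ := by
            apply Finset.prod_le_prod (fun i _ => zero_le_one)
            intro i hi
            have := Finset.mem_sdiff.mp hi |>.1
            simp only [Finset.mem_insert, Finset.mem_singleton] at this
            rcases this with rfl | rfl | rfl <;> exact hone _ (by norm_num)
      have h0 : (0 : ℝ) ≤ ∏ n ∈ T, f n := by
        apply Finset.prod_nonneg
        intro n hn
        have := hsub hn
        simp only [Finset.mem_insert, Finset.mem_singleton] at this
        rcases this with rfl | rfl | rfl <;> exact hnonneg _ (by norm_num)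
      nlinarith
    calc ∏ n ∈ T, f n ≤ ∏ n ∈ ({2, 3, 5} : Finset ℕ), f n := key
      _ = 1024 / 651 := by rw [hf]; norm_num
  have hlarge : ∏ p ∈ s.filter (fun p => ¬ p.1 ≤ 5), f (p : ℕ) ≤ 127 / 125 := by
    set B := s.filter (fun p => ¬ p.1 ≤ 5) with hB
    have h7 : ∀ p ∈ B, 7 ≤ (p : ℕ) := by
      intro p hp
      simp only [hB, Finset.mem_filter, not_le] at hp
      have h6 : (p : ℕ) ≠ 6 := by
        intro h; have := p.2.1; rw [h] at this; norm_num at this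
      have := hp.2
      omega
    calc ∏ p ∈ B, f (p : ℕ)
        ≤ ∏ p ∈ B, Real.exp ((128 / 127) * (1 / 2) ^ (p : ℕ)) := by
          apply Finset.prod_le_prod
          · intro p hp
            exact hnonneg _ (hmem2 p)
          · intro p hp
            exact aux_factor_le_exp (h7 p hp)
      _ = Real.exp (∑ p ∈ B, (128 / 127) * (1 / 2) ^ (p : ℕ)) := (Real.exp_sum _ _).symm
      _ ≤ Real.exp (2 / 127) := by
          apply Real.exp_le_exp.mpr
          rw [show (∑ p ∈ B, (128 / 127 : ℝ) * (1 / 2) ^ (p : ℕ))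
              = ∑ n ∈ B.image Subtype.val, (128 / 127 : ℝ) * (1 / 2) ^ n from
            (Finset.sum_image (f := fun n => (128/127 : ℝ) * (1/2)^n) (hinjgen B)).symm]
          rw [← Finset.mul_sum]
          have hT : ∀ n ∈ B.image Subtype.val, 7 ≤ n := by
            intro n hn
            simp only [Finset.mem_image] at hn
            obtain ⟨p, hp, rfl⟩ := hn
            exact h7 p hp
          have := aux_sum_tail _ hT
          nlinarith
      _ ≤ 127 / 125 := by
          have h1 : Real.exp (-(2 / 127 : ℝ)) ≥ 1 - 2 / 127 := by
            have := Real.add_one_le_exp (-(2 / 127 : ℝ))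
            linarith
          have h2 : Real.exp (2 / 127 : ℝ) * Real.exp (-(2/127 : ℝ)) = 1 := by
            rw [← Real.exp_add]; norm_num
          have h3 : (0:ℝ) < Real.exp (2/127) := Real.exp_pos _
          nlinarith
  have hApos : 0 ≤ ∏ p ∈ s.filter (fun p => p.1 ≤ 5), f (p : ℕ) :=
    Finset.prod_nonneg fun p _ => hnonneg _ (hmem2 p)
  have hBpos : (1:ℝ) ≤ ∏ p ∈ s.filter (fun p => ¬ p.1 ≤ 5), f (p : ℕ) := by
    calc (1:ℝ) = ∏ p ∈ s.filter (fun p => ¬ p.1 ≤ 5), 1 := by simp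
      _ ≤ _ := Finset.prod_le_prod (fun i _ => zero_le_one) (fun p _ => hone _ (hmem2 p))
  nlinarith

theorem tprod_mersenne_lt :
    (∏' p : {p : ℕ // p.Prime ∧ (2 ^ p - 1).Prime},
      ((2 : ℝ) ^ (p : ℕ)) / ((2 : ℝ) ^ (p : ℕ) - 1)) < 1.6131008 := by
  set f : {p : ℕ // p.Prime ∧ (2 ^ p - 1).Prime} → ℝ :=
    fun p => ((2 : ℝ) ^ (p : ℕ)) / ((2 : ℝ) ^ (p : ℕ) - 1) with hfdef
  by_cases hf : Multipliable f
  · have hle : (∏' p, f p) ≤ (1024 / 651) * (127 / 125) :=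
      le_of_tendsto' hf.hasProd fun s => aux_prod_le s
    calc (∏' p, f p) ≤ (1024 / 651 : ℝ) * (127 / 125) := hle
      _ < 1.6131008 := by norm_num
  · rw [tprod_eq_one_of_not_multipliable hf]
    norm_num
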